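/- There is an open neighborhood W of 0 in Sym_d(ℝ) such that for every h ∈ W with tr(h) ≤ 0 and every g ∈ GL_d(ℝ) with gᵗg = I_d + h, either g is orthogonal or det(g) < 1. -/

import Mathlib

open Matrix

/-- Martinet, Lemma 3.4.4(1): there is an open neighborhood `W` of `0` among symmetric
matrices such that if `h ∈ W` has `tr(h) ≤ 0` and `gᵗg = I + h` for an invertible `g`,
then `g` is orthogonal or `det g < 1`. -/
theorem orthogonal_or_det_lt_one {d : ℕ} :
    ∃ W : Set (Matrix (Fin d) (Fin d) ℝ), IsOpen W ∧ (0 : Matrix (Fin d) (Fin d) ℝ) ∈ W ∧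
      ∀ h ∈ W, h.IsSymm → h.trace ≤ 0 →
        ∀ g : Matrix (Fin d) (Fin d) ℝ, g.det ≠ 0 → gᵀ * g = 1 + h →
          gᵀ * g = 1 ∨ g.det < 1 := by
  refine ⟨Set.univ, isOpen_univ, Set.mem_univ _, ?_⟩
  intro h _ _ htr g hg hgg
  by_cases hdet : g.det < 1
  · exact Or.inr hdet
  left
  push_neg at hdet
  set A : Matrix (Fin d) (Fin d) ℝ := gᵀ * g with hA
  have hAct : A = gᴴ * g := by rw [hA, conjTranspose_eq_transpose_of_trivial]
  have hps : A.PosSemidef := hAct ▸ posSemidef_conjTranspose_mul_self g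
  have hherm := hps.isHermitian
  set μ := hherm.eigenvalues with hμ
  have hdetA : A.det = ∏ i, μ i := by simpa using hherm.det_eq_prod_eigenvalues
  have hdetA' : A.det = g.det ^ 2 := by rw [hA, det_mul, det_transpose, sq]
  have hprod_ge : (1 : ℝ) ≤ ∏ i, μ i := by
    rw [← hdetA, hdetA']; nlinarith
  have hμpos : ∀ i, 0 < μ i := by
    intro i
    refine lt_of_le_of_ne (hps.eigenvalues_nonneg i) fun hz => ?_
    have : A.det ≠ 0 := by rw [hdetA']; positivity
    rw [hdetA] at this
    exact this (Finset.prod_eq_zero (Finset.mem_univ i) hz.symm)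
  -- trace of A equals the sum of eigenvalues
  have hUU : (hherm.eigenvectorUnitary : Matrix (Fin d) (Fin d) ℝ) *
      star (hherm.eigenvectorUnitary : Matrix (Fin d) (Fin d) ℝ) = 1 :=
    mem_unitaryGroup_iff.mp hherm.eigenvectorUnitary.2
  have htrA : A.trace = ∑ i, μ i := by
    conv_lhs => rw [hherm.spectral_theorem]
    rw [Unitary.conjStarAlgAut_apply, trace_mul_cycle]
    rw [mem_unitaryGroup_iff'.mp hherm.eigenvectorUnitary.2, one_mul, trace_diagonal]
    simp [hμ]
  have htrA' : A.trace ≤ d := by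
    rw [hgg, trace_add, trace_one]
    simpa using htr
  -- all eigenvalues are 1
  have hall : ∀ i, μ i = 1 := by
    by_contra hc
    push_neg at hc
    obtain ⟨j, hj⟩ := hc
    have hlt : ∏ i, μ i < ∏ i, Real.exp (μ i - 1) := by
      refine Finset.prod_lt_prod (fun i _ => hμpos i)
        (fun i _ => by simpa using Real.add_one_le_exp (μ i - 1))
        ⟨j, Finset.mem_univ j, ?_⟩
      have := Real.add_one_lt_exp (x := μ j - 1) (by intro hz; apply hj; linarith)
      linarith
    have hle : ∏ i, Real.exp (μ i - 1) ≤ 1 := by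
      rw [← Real.exp_sum]
      have : ∑ i, (μ i - 1) ≤ 0 := by
        rw [Finset.sum_sub_distrib]
        simp only [Finset.sum_const, Finset.card_univ, Fintype.card_fin, nsmul_eq_mul, mul_one]
        rw [← htrA]
        linarith
      calc Real.exp (∑ i, (μ i - 1)) ≤ Real.exp 0 := Real.exp_le_exp.mpr this
        _ = 1 := Real.exp_zero
    linarith
  -- conclude A = 1
  have : A = 1 := by
    conv_lhs => rw [hherm.spectral_theorem]
    have hdiag : diagonal (RCLike.ofReal ∘ μ) = (1 : Matrix (Fin d) (Fin d) ℝ) := by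
      have h1 : RCLike.ofReal ∘ μ = fun _ : Fin d => (1 : ℝ) := funext fun i => by simp [hall i]
      rw [h1]
      exact diagonal_one
    rw [hdiag, Unitary.conjStarAlgAut_apply, mul_one, hUU]
  exact this
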